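/- Let A = ⋃_{C>0} A_C ⊂ ℂ[[t]]. Then every nonzero element a ∈ A can be written as a = u t^ℓ for some integer ℓ ≥ 0 and some element u that is invertible in A. In particular A is a discrete valuation ring. -/

import Mathlib

open PowerSeries Finset

/-- Membership in `A_C`: the series `∑ |a_j| C^j / j!` converges. -/
def MemAC (C : ℝ) (a : PowerSeries ℂ) : Prop :=
  Summable fun j : ℕ => ‖coeff j a‖ * C ^ j / (Nat.factorial j : ℝ)

/-- Membership in `A = ⋃_{C>0} A_C`. -/
def MemA (a : PowerSeries ℂ) : Prop := ∃ C : ℝ, 0 < C ∧ MemAC C a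

lemma term_le_tsum {C : ℝ} {a : PowerSeries ℂ} (h : MemAC C a) (hC : 0 ≤ C) (j : ℕ) :
    ‖coeff j a‖ * C ^ j / (Nat.factorial j : ℝ)
      ≤ ∑' i : ℕ, ‖coeff i a‖ * C ^ i / (Nat.factorial i : ℝ) :=
  h.le_tsum j (fun i _ => by positivity)

lemma shift_memAC {a : PowerSeries ℂ} {C : ℝ} (hC : 0 < C) (h : MemAC C a) (ℓ : ℕ)
    (u : PowerSeries ℂ) (hu : ∀ k, coeff k u = coeff (k + ℓ) a) : MemAC (C / 2) u := by
  set B := ∑' i : ℕ, ‖coeff i a‖ * C ^ i / (Nat.factorial i : ℝ) with hB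
  have hBle := term_le_tsum h hC.le
  have hB0 : 0 ≤ B := le_trans (by positivity) (hBle 0)
  have h1 : Summable fun n : ℕ => (n : ℝ) ^ ℓ * (1 / 2 : ℝ) ^ n :=
    summable_pow_mul_geometric_of_norm_lt_one ℓ
      (by rw [Real.norm_eq_abs, abs_of_pos] <;> norm_num)
  have h2 : Summable fun k : ℕ => ((k + ℓ : ℕ) : ℝ) ^ ℓ * (1 / 2 : ℝ) ^ (k + ℓ) :=
    h1.comp_injective (add_left_injective ℓ)
  have h3 : Summable fun k : ℕ => B * (1 / C) ^ ℓ * (((k + ℓ : ℕ) : ℝ) ^ ℓ * (1 / 2 : ℝ) ^ k) := by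
    have := (h2.mul_left (B * (1 / C) ^ ℓ * (2 : ℝ) ^ ℓ))
    refine this.congr fun k => ?_
    rw [pow_add]
    have h2l : (1 / 2 : ℝ) ^ ℓ * 2 ^ ℓ = 1 := by rw [← mul_pow]; norm_num
    linear_combination (B * (1 / C) ^ ℓ * ((k + ℓ : ℕ) : ℝ) ^ ℓ * (1 / 2 : ℝ) ^ k) * h2l
  refine h3.of_nonneg_of_le (fun k => by positivity) fun k => ?_
  have hfac : (((k + ℓ).factorial : ℝ)) ≤ (k.factorial : ℝ) * ((k + ℓ : ℕ) : ℝ) ^ ℓ := by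
    have := Nat.ascFactorial_le_pow_add k ℓ
    have e := Nat.factorial_mul_ascFactorial k ℓ
    calc (((k + ℓ).factorial : ℝ)) = (k.factorial : ℝ) * ((k+1).ascFactorial ℓ : ℝ) := by
          rw [← e]; push_cast; ring
      _ ≤ (k.factorial : ℝ) * ((k + ℓ : ℕ) : ℝ) ^ ℓ := by
          gcongr
          exact_mod_cast this
  have hBk := hBle (k + ℓ)
  have habs : ‖coeff k u‖ ≤ B * ((k + ℓ).factorial : ℝ) / C ^ (k + ℓ) := by
    rw [hu k]
    rw [div_le_iff₀ (by positivity)] at hBk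
    rw [le_div_iff₀ (by positivity)]
    nlinarith [norm_nonneg (coeff (k + ℓ) a), pow_pos hC (k + ℓ),
      (Nat.cast_pos.mpr (Nat.factorial_pos (k + ℓ)) : (0:ℝ) < (k+ℓ).factorial)]
  calc ‖coeff k u‖ * (C / 2) ^ k / (k.factorial : ℝ)
      ≤ (B * ((k + ℓ).factorial : ℝ) / C ^ (k + ℓ)) * (C / 2) ^ k / (k.factorial : ℝ) := by
        gcongr
    _ ≤ (B * ((k.factorial : ℝ) * ((k + ℓ : ℕ) : ℝ) ^ ℓ) / C ^ (k + ℓ)) * (C / 2) ^ k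
          / (k.factorial : ℝ) := by gcongr
    _ = B * (1 / C) ^ ℓ * (((k + ℓ : ℕ) : ℝ) ^ ℓ * (1 / 2 : ℝ) ^ k) := by
        have hk : (0:ℝ) < (k.factorial : ℝ) := by positivity
        field_simp [pow_add]
        have hCl : C ^ ℓ * C⁻¹ ^ ℓ = 1 := by rw [← mul_pow, mul_inv_cancel₀ hC.ne', one_pow]
        linear_combination (-(B * ((k + ℓ : ℕ) : ℝ) ^ ℓ * C ^ k * (1 / 2 : ℝ) ^ k)) * hCl

lemma inv_memA {u : PowerSeries ℂ} (hu : MemA u) (h0 : constantCoeff u ≠ 0) :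
    MemA u⁻¹ := by
  obtain ⟨C, hC, hsum⟩ := hu
  set v := u⁻¹ with hv
  have hmul : u * v = 1 := PowerSeries.mul_inv_cancel u h0
  set r := ‖constantCoeff u‖ with hrdef
  have hr : 0 < r := by
    simp only [hrdef, norm_pos_iff]; exact h0
  set B := ∑' i : ℕ, ‖coeff i u‖ * C ^ i / (Nat.factorial i : ℝ) with hBdef
  have hBle := term_le_tsum hsum hC.le
  have hrB : r ≤ B := by
    have := hBle 0
    simpa [coeff_zero_eq_constantCoeff] using this
  have hB : 0 < B := lt_of_lt_of_le hr hrB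
  set θ : ℝ := min (4⁻¹ : ℝ) (r / (4 * B)) with hθdef
  have hθpos : 0 < θ := lt_min (by norm_num) (by positivity)
  have hθ4 : θ ≤ 4⁻¹ := min_le_left _ _
  have hθr : 4 * B * θ ≤ r := by
    have h' : θ ≤ r / (4 * B) := min_le_right _ _
    rw [le_div_iff₀ (by positivity)] at h'
    nlinarith
  set D : ℝ := θ * C with hDdef
  have hD : 0 < D := by positivity
  have hv0 : ‖coeff 0 v‖ = r⁻¹ := by
    have h1 : constantCoeff u * constantCoeff v = 1 := by
      rw [← map_mul, hmul, map_one]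
    have h2 : constantCoeff v = (constantCoeff u)⁻¹ :=
      eq_inv_of_mul_eq_one_right h1
    rw [coeff_zero_eq_constantCoeff, h2, norm_inv]
  have key : ∀ n : ℕ, ‖coeff n v‖ * D ^ n / (Nat.factorial n : ℝ)
      ≤ r⁻¹ * (1 / 2 : ℝ) ^ n := by
    intro n
    induction n using Nat.strong_induction_on with
    | _ n ih =>
      match n with
      | 0 =>
        rw [coeff_zero_eq_constantCoeff] at hv0
        simp [hv0]
      | (n + 1) =>
        have hco : (coeff (n + 1)) (u * v) = 0 := by
          rw [hmul, coeff_one]; simp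
        rw [coeff_mul, Finset.Nat.sum_antidiagonal_eq_sum_range_succ_mk,
          Finset.sum_range_succ'] at hco
        simp only [Nat.add_sub_add_right, Nat.sub_zero] at hco
        have heq : coeff 0 u * coeff (n + 1) v
            = -∑ i ∈ range (n + 1), coeff (i + 1) u * coeff (n - i) v := by
          linear_combination hco
        have habs : r * ‖coeff (n + 1) v‖
            ≤ ∑ i ∈ range (n + 1),
                ‖coeff (i + 1) u‖ * ‖coeff (n - i) v‖ := by
          have e1 : r * ‖coeff (n + 1) v‖
              = ‖coeff 0 u * coeff (n + 1) v‖ := by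
            rw [norm_mul, coeff_zero_eq_constantCoeff]
          rw [e1, heq, norm_neg]
          refine le_trans (norm_sum_le _ _) ?_
          refine le_of_eq (Finset.sum_congr rfl fun i _ => ?_)
          rw [norm_mul]
        have hvb : ‖coeff (n + 1) v‖
            ≤ r⁻¹ * ∑ i ∈ range (n + 1),
                ‖coeff (i + 1) u‖ * ‖coeff (n - i) v‖ := by
          rw [inv_mul_eq_div, le_div_iff₀ hr]
          linarith
        have hsumnonneg : (0:ℝ) ≤ ∑ i ∈ range (n + 1),
            ‖coeff (i + 1) u‖ * ‖coeff (n - i) v‖ :=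
          Finset.sum_nonneg fun i _ => by positivity
        have perterm : ∀ i ∈ range (n + 1),
            ‖coeff (i + 1) u‖ * ‖coeff (n - i) v‖
              * (D ^ (n + 1) / ((n + 1).factorial : ℝ))
            ≤ (B * r⁻¹ * θ * (1 / 2 : ℝ) ^ n) * (2 * θ) ^ i := by
          intro i hi
          rw [Finset.mem_range] at hi
          have hin : i ≤ n := by omega
          have e1 : D ^ (n + 1) = D ^ (i + 1) * D ^ (n - i) := by
            rw [← pow_add]; congr 1; omega
          have e2 : (((i+1).factorial : ℝ) * ((n-i).factorial : ℝ))
              ≤ ((n+1).factorial : ℝ) := by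
            have hd := Nat.factorial_mul_factorial_dvd_factorial_add (i+1) (n-i)
            rw [show i + 1 + (n - i) = n + 1 by omega] at hd
            exact_mod_cast Nat.le_of_dvd (Nat.factorial_pos _) hd
          have hfirst : ‖coeff (i + 1) u‖ * D ^ (i + 1)
                / (((i+1).factorial : ℝ)) ≤ B * θ ^ (i + 1) := by
            have eD : D ^ (i + 1) = θ ^ (i + 1) * C ^ (i + 1) := by
              rw [hDdef, mul_pow]
            have := hBle (i + 1)
            calc ‖coeff (i + 1) u‖ * D ^ (i + 1) / (((i+1).factorial : ℝ))
                = (‖coeff (i + 1) u‖ * C ^ (i + 1)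
                    / (((i+1).factorial : ℝ))) * θ ^ (i + 1) := by
                  rw [eD]; ring
              _ ≤ B * θ ^ (i + 1) := by gcongr
          have hsecond := ih (n - i) (by omega)
          calc ‖coeff (i + 1) u‖ * ‖coeff (n - i) v‖
              * (D ^ (n + 1) / ((n + 1).factorial : ℝ))
              ≤ ‖coeff (i + 1) u‖ * ‖coeff (n - i) v‖
                * (D ^ (i + 1) * D ^ (n - i)
                  / (((i+1).factorial : ℝ) * ((n-i).factorial : ℝ))) := by
                rw [e1]
                gcongr
            _ = (‖coeff (i + 1) u‖ * D ^ (i + 1) / (((i+1).factorial : ℝ)))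
                * (‖coeff (n - i) v‖ * D ^ (n - i)
                  / (((n-i).factorial : ℝ))) := by ring
            _ ≤ (B * θ ^ (i + 1)) * (r⁻¹ * (1 / 2 : ℝ) ^ (n - i)) := by
                refine mul_le_mul hfirst hsecond (by positivity) (by positivity)
            _ = (B * r⁻¹ * θ * (1 / 2 : ℝ) ^ n) * (2 * θ) ^ i := by
                have h12 : (1/2:ℝ) ^ i * 2 ^ i = 1 := by
                  rw [← mul_pow]; norm_num
                have hpow : (1/2:ℝ) ^ (n - i) = (1/2:ℝ) ^ n * 2 ^ i := by
                  calc (1/2:ℝ) ^ (n - i) = (1/2:ℝ) ^ (n - i) * ((1/2:ℝ) ^ i * 2 ^ i) := by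
                        rw [h12, mul_one]
                    _ = (1/2:ℝ) ^ n * 2 ^ i := by
                        rw [← mul_assoc, ← pow_add, show n - i + i = n by omega]
                rw [hpow, mul_pow, pow_succ]
                ring
        have hgeom : ∑ i ∈ range (n + 1), (2 * θ) ^ i ≤ 2 := by
          calc ∑ i ∈ range (n + 1), (2 * θ) ^ i
              ≤ ∑ i ∈ range (n + 1), (1/2 : ℝ) ^ i := by
                refine Finset.sum_le_sum fun i _ => ?_
                refine pow_le_pow_left₀ (by positivity) (by linarith [hθ4]) i
            _ ≤ 2 := sum_geometric_two_le _
        calc ‖coeff (n + 1) v‖ * D ^ (n + 1) / ((n + 1).factorial : ℝ)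
            ≤ (r⁻¹ * ∑ i ∈ range (n + 1),
                ‖coeff (i + 1) u‖ * ‖coeff (n - i) v‖)
              * D ^ (n + 1) / ((n + 1).factorial : ℝ) := by gcongr
          _ = r⁻¹ * ∑ i ∈ range (n + 1),
                ‖coeff (i + 1) u‖ * ‖coeff (n - i) v‖
                  * (D ^ (n + 1) / ((n + 1).factorial : ℝ)) := by
              rw [← Finset.sum_mul]; ring
          _ ≤ r⁻¹ * ∑ i ∈ range (n + 1),
                (B * r⁻¹ * θ * (1 / 2 : ℝ) ^ n) * (2 * θ) ^ i :=
              mul_le_mul_of_nonneg_left (Finset.sum_le_sum perterm) (inv_nonneg.mpr hr.le)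
          _ = r⁻¹ * ((B * r⁻¹ * θ * (1 / 2 : ℝ) ^ n) * ∑ i ∈ range (n + 1), (2 * θ) ^ i) := by
              simp only [Finset.mul_sum]
          _ ≤ r⁻¹ * ((B * r⁻¹ * θ * (1 / 2 : ℝ) ^ n) * 2) :=
              mul_le_mul_of_nonneg_left
                (mul_le_mul_of_nonneg_left hgeom (by positivity)) (inv_nonneg.mpr hr.le)
          _ ≤ r⁻¹ * (1 / 2 : ℝ) ^ (n + 1) := by
              have hri : (0:ℝ) < r⁻¹ := by positivity
              have hp : (0:ℝ) < (1/2:ℝ) ^ n := by positivity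
              have h1 : 4 * B * θ * r⁻¹ ≤ 1 := by
                rw [← div_eq_mul_inv, div_le_one hr]
                exact hθr
              have hint := mul_le_mul_of_nonneg_right h1 (le_of_lt (mul_pos hri hp))
              rw [pow_succ]
              nlinarith
  refine ⟨D, hD, ?_⟩
  refine Summable.of_nonneg_of_le (fun n => by positivity) key ?_
  exact (summable_geometric_of_lt_one (by norm_num) (by norm_num)).mul_left r⁻¹

/-- Every nonzero `a ∈ A` can be written as `a = u t^ℓ` with `u` invertible in `A`
(i.e. `u ∈ A` and `u` has an inverse lying in `A`).  This is the key statement making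
`A` a discrete valuation ring. -/
theorem stmt_4 (a : PowerSeries ℂ) (ha : MemA a) (hne : a ≠ 0) :
    ∃ (ℓ : ℕ) (u : PowerSeries ℂ), MemA u ∧
      (∃ v : PowerSeries ℂ, MemA v ∧ u * v = 1) ∧ a = u * X ^ ℓ := by
  have hlt : order a < ⊤ := order_finite_iff_ne_zero.mpr hne
  obtain ⟨w, hw⟩ := X_pow_order_dvd (φ := a)
  set ℓ := (order a).toNat with hℓ
  have hcoeff : ∀ k, coeff k w = coeff (k + ℓ) a := by
    intro k
    rw [hw, coeff_X_pow_mul]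
  have hw0 : constantCoeff w ≠ 0 := by
    rw [← coeff_zero_eq_constantCoeff_apply, hcoeff 0]
    simpa using coeff_order hne
  obtain ⟨C, hC, hs⟩ := ha
  have hwA : MemA w := ⟨C / 2, by positivity, shift_memAC hC hs ℓ w hcoeff⟩
  refine ⟨ℓ, w, hwA, ⟨w⁻¹, inv_memA hwA hw0, PowerSeries.mul_inv_cancel w hw0⟩, ?_⟩
  rw [hw, mul_comm]
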